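/- Relative completeness of the double chain algorithm: let π be a template with n parameters and suppose m ≥ 0 satisfies V_{m+1} = V_m and J_{m+1} = J_m. Then J_m is a Φ-invariant containing π[V_m], and for every Φ-invariant I with Z_Φ ∩ π[ℝ^n] ⊆ I one has J_m ⊆ I; that is, J_m is the smallest Φ-invariant containing π[V_m]. -/

import Mathlib

open MvPolynomial

/-- The Lie derivative of a polynomial along the polynomial vector field `F`. -/
noncomputable def lieDeriv {N : ℕ} (F : Fin N → MvPolynomial (Fin N) ℝ)
    (p : MvPolynomial (Fin N) ℝ) : MvPolynomial (Fin N) ℝ :=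
  ∑ i, pderiv i p * F i

/-- `I` is a `Φ`-invariant ideal: every element vanishes at `v₀` and `I` is closed
under Lie derivation. -/
def IsInvariantIdeal {N : ℕ} (F : Fin N → MvPolynomial (Fin N) ℝ) (v₀ : Fin N → ℝ)
    (I : Ideal (MvPolynomial (Fin N) ℝ)) : Prop :=
  (∀ p ∈ I, eval v₀ p = 0) ∧ ∀ p ∈ I, lieDeriv F p ∈ I

/-- `Z_Φ`: the set of polynomials whose induced behaviour vanishes identically on `D`. -/
def Zset {N : ℕ} (x : ℝ → Fin N → ℝ) (D : Set ℝ) : Set (MvPolynomial (Fin N) ℝ) :=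
  {p | ∀ t ∈ D, eval (x t) p = 0}

/-- The vector space `V_i` of parameters `v` such that all Lie derivatives of `π[v]`
up to order `i` vanish at `v₀`. -/
def Vset {N n : ℕ} (F : Fin N → MvPolynomial (Fin N) ℝ) (v₀ : Fin N → ℝ)
    (π : (Fin n → ℝ) →ₗ[ℝ] MvPolynomial (Fin N) ℝ) (i : ℕ) : Set (Fin n → ℝ) :=
  {v | ∀ j ≤ i, eval v₀ ((lieDeriv F)^[j] (π v)) = 0}

/-- The ideal `J_i` generated by `⋃_{j=0}^{i} 𝓛⁽ʲ⁾(π[V_i])`. -/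
noncomputable def Jideal {N n : ℕ} (F : Fin N → MvPolynomial (Fin N) ℝ)
    (v₀ : Fin N → ℝ) (π : (Fin n → ℝ) →ₗ[ℝ] MvPolynomial (Fin N) ℝ) (i : ℕ) :
    Ideal (MvPolynomial (Fin N) ℝ) :=
  Ideal.span {q | ∃ j ≤ i, ∃ v ∈ Vset F v₀ π i, q = (lieDeriv F)^[j] (π v)}

/- ### Auxiliary lemmas -/

lemma lieDeriv_add' {N : ℕ} (F : Fin N → MvPolynomial (Fin N) ℝ)
    (p q : MvPolynomial (Fin N) ℝ) :
    lieDeriv F (p + q) = lieDeriv F p + lieDeriv F q := by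
  simp [lieDeriv, add_mul, Finset.sum_add_distrib]

lemma lieDeriv_mul' {N : ℕ} (F : Fin N → MvPolynomial (Fin N) ℝ)
    (p q : MvPolynomial (Fin N) ℝ) :
    lieDeriv F (p * q) = lieDeriv F p * q + p * lieDeriv F q := by
  rw [lieDeriv, lieDeriv, lieDeriv, Finset.sum_mul, Finset.mul_sum, ← Finset.sum_add_distrib]
  refine Finset.sum_congr rfl fun i _ => ?_
  rw [pderiv_mul]; ring

lemma lieDeriv_X' {N : ℕ} (F : Fin N → MvPolynomial (Fin N) ℝ) (i : Fin N) :
    lieDeriv F (X i) = F i := by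
  rw [lieDeriv, Finset.sum_eq_single i] <;> simp_all [pderiv_X, Pi.single_apply]

section Aux

variable {N : ℕ} {F : Fin N → MvPolynomial (Fin N) ℝ} {D : Set ℝ} {x : ℝ → Fin N → ℝ}

lemma hasDerivAt_eval
    (hsol : ∀ t ∈ D, HasDerivAt x (fun i => eval (x t) (F i)) t)
    (p : MvPolynomial (Fin N) ℝ) {t : ℝ} (ht : t ∈ D) :
    HasDerivAt (fun s => eval (x s) p) (eval (x t) (lieDeriv F p)) t := by
  induction p using MvPolynomial.induction_on with
  | C r => simpa [lieDeriv] using hasDerivAt_const t (r : ℝ)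
  | add p q hp hq => simpa [lieDeriv, add_mul, Finset.sum_add_distrib, Pi.add_def] using hp.add hq
  | mul_X p i hp =>
      have hi : HasDerivAt (fun s => x s i) (eval (x t) (F i)) t := by
        simpa [Function.comp_def] using ((ContinuousLinearMap.proj (R := ℝ) (φ := fun _ : Fin N => ℝ) i)
          |>.hasFDerivAt.comp_hasDerivAt t (hsol t ht))
      have := hp.mul hi
      simp only [lieDeriv_mul', lieDeriv_X', map_add, map_mul, eval_X]
      simpa [mul_comm, Pi.mul_def] using this

lemma analyticOnNhd_eval
    (han : ∀ i, AnalyticOnNhd ℝ (fun t => x t i) D)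
    (p : MvPolynomial (Fin N) ℝ) :
    AnalyticOnNhd ℝ (fun t => eval (x t) p) D := by
  induction p using MvPolynomial.induction_on with
  | C r => simpa using analyticOnNhd_const
  | add p q hp hq => simpa [Pi.add_def] using hp.add hq
  | mul_X p i hp => simpa using hp.mul (han i)

lemma iteratedDeriv_eval (hD : IsOpen D)
    (hsol : ∀ t ∈ D, HasDerivAt x (fun i => eval (x t) (F i)) t)
    (p : MvPolynomial (Fin N) ℝ) (j : ℕ) :
    ∀ t ∈ D, iteratedDeriv j (fun s => eval (x s) p) t = eval (x t) ((lieDeriv F)^[j] p) := by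
  induction j with
  | zero => intro t ht; simp
  | succ j ih =>
      intro t ht
      rw [iteratedDeriv_succ]
      have heq : iteratedDeriv j (fun s => eval (x s) p) =ᶠ[nhds t]
          fun s => eval (x s) ((lieDeriv F)^[j] p) :=
        Filter.eventuallyEq_of_mem (hD.mem_nhds ht) ih
      rw [heq.deriv_eq, Function.iterate_succ_apply']
      exact (hasDerivAt_eval hsol ((lieDeriv F)^[j] p) ht).deriv

/-- An analytic function on a preconnected open set whose iterated derivatives all
vanish at a point vanishes identically. -/
lemma analytic_eq_zero {g : ℝ → ℝ} (hDp : IsPreconnected D) {t₀ : ℝ} (ht₀ : t₀ ∈ D)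
    (hg : AnalyticOnNhd ℝ g D) (h : ∀ j, iteratedDeriv j g t₀ = 0) :
    ∀ t ∈ D, g t = 0 := by
  obtain ⟨P, r, hP⟩ := hg t₀ ht₀
  have hz : ∀ y ∈ Metric.eball (0 : ℝ) r, g (t₀ + y) = 0 := by
    intro y hy
    have hs := hP.hasSum_iteratedFDeriv hy
    have hzero : (fun n => ((n.factorial : ℝ))⁻¹ • iteratedFDeriv ℝ n g t₀ fun _ => y)
        = fun _ => (0 : ℝ) := by
      funext n
      have h1 : (iteratedFDeriv ℝ n g t₀ fun _ => y)
          = (∏ _i : Fin n, y) • iteratedFDeriv ℝ n g t₀ fun _ => (1 : ℝ) := by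
        rw [← ContinuousMultilinearMap.map_smul_univ]
        congr; funext _; simp
      rw [h1, ← iteratedDeriv_eq_iteratedFDeriv, h n]
      simp
    rw [hzero] at hs
    simpa using hs.unique hasSum_zero
  have hev : g =ᶠ[nhds t₀] 0 := by
    filter_upwards [EMetric.ball_mem_nhds t₀ hP.r_pos] with s hs
    have : s - t₀ ∈ Metric.eball (0 : ℝ) r := by
      simpa [edist_eq_enorm_sub] using hs
    simpa using hz (s - t₀) this
  exact fun t ht => hg.eqOn_zero_of_preconnected_of_eventuallyEq_zero hDp ht₀ hev ht

variable {n : ℕ} {v₀ : Fin N → ℝ} {π : (Fin n → ℝ) →ₗ[ℝ] MvPolynomial (Fin N) ℝ}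

/-- An ideal generated by a set closed under Lie derivation (into the ideal)
is closed under Lie derivation. -/
lemma lieDeriv_mem_span {S : Set (MvPolynomial (Fin N) ℝ)}
    (hS : ∀ s ∈ S, lieDeriv F s ∈ Ideal.span S) :
    ∀ p ∈ Ideal.span S, lieDeriv F p ∈ Ideal.span S := by
  intro p hp
  refine Submodule.span_induction (p := fun q _ => lieDeriv F q ∈ Ideal.span S)
    hS ?_ ?_ ?_ hp
  · simp [lieDeriv]
  · intro a b _ _ ha hb
    rw [lieDeriv_add']
    exact Ideal.add_mem _ ha hb
  · intro a b hb hlb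
    rw [smul_eq_mul, lieDeriv_mul']
    exact Ideal.add_mem _ (Ideal.mul_mem_left _ (lieDeriv F a) hb)
      (Ideal.mul_mem_left _ a hlb)

lemma iterate_mem {I : Ideal (MvPolynomial (Fin N) ℝ)} (hI : ∀ p ∈ I, lieDeriv F p ∈ I)
    {p : MvPolynomial (Fin N) ℝ} (hp : p ∈ I) (j : ℕ) : (lieDeriv F)^[j] p ∈ I := by
  induction j with
  | zero => exact hp
  | succ j ih => rw [Function.iterate_succ_apply']; exact hI _ ih

end Aux

/-- relative completeness of the double chain algorithm: if
`V_{m+1} = V_m` and `J_{m+1} = J_m`, then `J_m` is a `Φ`-invariant containing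
`π[V_m]`, every `Φ`-invariant containing `Z_Φ ∩ π[ℝⁿ]` contains `J_m`, and `J_m`
is the smallest `Φ`-invariant containing `π[V_m]`. -/
theorem stmt11
    (N n : ℕ) (hN : 1 ≤ N)
    (F : Fin N → MvPolynomial (Fin N) ℝ) (v₀ : Fin N → ℝ)
    (D : Set ℝ) (hD : IsOpen D) (hDc : D.OrdConnected) (h0 : (0 : ℝ) ∈ D)
    (x : ℝ → Fin N → ℝ)
    (hsol : ∀ t ∈ D, HasDerivAt x (fun i => eval (x t) (F i)) t)
    (hx0 : x 0 = v₀)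
    (han : ∀ i, AnalyticOnNhd ℝ (fun t => x t i) D)
    (π : (Fin n → ℝ) →ₗ[ℝ] MvPolynomial (Fin N) ℝ) (m : ℕ)
    (hV : Vset F v₀ π (m + 1) = Vset F v₀ π m)
    (hJ : Jideal F v₀ π (m + 1) = Jideal F v₀ π m) :
    IsInvariantIdeal F v₀ (Jideal F v₀ π m) ∧
    ⇑π '' Vset F v₀ π m ⊆ (Jideal F v₀ π m : Set (MvPolynomial (Fin N) ℝ)) ∧
    (∀ I : Ideal (MvPolynomial (Fin N) ℝ), IsInvariantIdeal F v₀ I →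
      Zset x D ∩ Set.range ⇑π ⊆ (I : Set (MvPolynomial (Fin N) ℝ)) →
      Jideal F v₀ π m ≤ I) ∧
    (∀ I : Ideal (MvPolynomial (Fin N) ℝ), IsInvariantIdeal F v₀ I →
      ⇑π '' Vset F v₀ π m ⊆ (I : Set (MvPolynomial (Fin N) ℝ)) →
      Jideal F v₀ π m ≤ I) := by
  have hJspan : Jideal F v₀ π m
      = Ideal.span {q | ∃ j ≤ m, ∃ v ∈ Vset F v₀ π m, q = (lieDeriv F)^[j] (π v)} := rfl
  -- every element of J_m vanishes at v₀
  have hJ0 : ∀ p ∈ Jideal F v₀ π m, eval v₀ p = 0 := by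
    have hle : Jideal F v₀ π m ≤ RingHom.ker (eval v₀ : MvPolynomial (Fin N) ℝ →+* ℝ) := by
      rw [hJspan, Ideal.span_le]
      rintro q ⟨j, hj, v, hv, rfl⟩
      exact hv j hj
    exact fun p hp => hle hp
  -- J_m is closed under Lie derivation
  have hJL : ∀ p ∈ Jideal F v₀ π m, lieDeriv F p ∈ Jideal F v₀ π m := by
    rw [hJspan]
    apply lieDeriv_mem_span
    rintro q ⟨j, hj, v, hv, rfl⟩
    rw [show lieDeriv F ((lieDeriv F)^[j] (π v)) = (lieDeriv F)^[j + 1] (π v) from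
      (Function.iterate_succ_apply' _ _ _).symm]
    rcases lt_or_eq_of_le hj with h | h
    · exact Ideal.subset_span ⟨j + 1, h, v, hv, rfl⟩
    · subst h
      have hv' : v ∈ Vset F v₀ π (j + 1) := hV ▸ hv
      have hmem : (lieDeriv F)^[j + 1] (π v) ∈ Jideal F v₀ π (j + 1) :=
        Ideal.subset_span ⟨j + 1, le_refl _, v, hv', rfl⟩
      rw [hJ] at hmem
      exact hmem
  have hinv : IsInvariantIdeal F v₀ (Jideal F v₀ π m) := ⟨hJ0, hJL⟩
  -- all iterated Lie derivatives of π v belong to J_m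
  have hkey : ∀ v ∈ Vset F v₀ π m, ∀ j, (lieDeriv F)^[j] (π v) ∈ Jideal F v₀ π m :=
    fun v hv j => iterate_mem hJL
      (Ideal.subset_span ⟨0, Nat.zero_le _, v, hv, rfl⟩) j
  -- π v vanishes along the trajectory
  have hDp : IsPreconnected D := isPreconnected_iff_ordConnected.mpr hDc
  have hZmem : ∀ v ∈ Vset F v₀ π m, π v ∈ Zset x D := by
    intro v hv t ht
    refine analytic_eq_zero hDp h0 (analyticOnNhd_eval han (π v)) (fun j => ?_) t ht
    rw [iteratedDeriv_eval hD hsol (π v) j 0 h0, hx0]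
    exact hJ0 _ (hkey v hv j)
  refine ⟨hinv, ?_, ?_, ?_⟩
  · rintro q ⟨v, hv, rfl⟩
    exact Ideal.subset_span ⟨0, Nat.zero_le _, v, hv, rfl⟩
  · intro I hI hsub
    rw [hJspan, Ideal.span_le]
    rintro q ⟨j, hj, v, hv, rfl⟩
    exact iterate_mem hI.2 (hsub ⟨hZmem v hv, ⟨v, rfl⟩⟩) j
  · intro I hI hsub
    rw [hJspan, Ideal.span_le]
    rintro q ⟨j, hj, v, hv, rfl⟩
    exact iterate_mem hI.2 (hsub ⟨v, hv, rfl⟩) j
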